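/- Let ρ > 0, α > 0, and let ψ₁ : [0,ρ] → ℝ and ψ₂ : ℝ₊ → ℝ be Lipschitz, nondecreasing, and convex with ψ₂ satisfying ψ₂(y) − ψ₂(y') ≤ (αρ/2)(y−y') for y ≥ y'. Set ψ(x) = ψ₁(x₁) + ψ₂(x₂). Then the function f(t,x) = sup_{z ∈ ℝ₊ × [0, αρ/2]} inf_{y ∈ [0,ρ] × ℝ₊} { z·(x−y) + ψ(y) + (2t/α) z₁ z₂ } is finite on Ω = {(t,x) : t ∈ [0,1], x₁ ∈ [0, ρ(1−t)], x₂ ≥ 0}, and f(0,x) = ψ(x) for all x ∈ [0,ρ] × ℝ₊. -/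

import Mathlib

open Set

/-- A convex, monotone function on a set `D ⊆ ℝ` has a nonnegative subgradient at any
point `x ∈ D` that has points of `D` to its right; the subgradient can be taken to be
the infimum of the right slopes. -/
lemma exists_subgradient_of_convexOn (g : ℝ → ℝ) (D : Set ℝ) (hconv : ConvexOn ℝ D g)
    (hmono : MonotoneOn g D) (x : ℝ) (hx : x ∈ D) (hne : (D ∩ Ioi x).Nonempty) :
    ∃ s : ℝ, 0 ≤ s ∧ (∀ y ∈ D ∩ Ioi x, s ≤ (g y - g x) / (y - x)) ∧
      ∀ y ∈ D, g x + s * (y - x) ≤ g y := by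
  set S : Set ℝ := (fun y => (g y - g x) / (y - x)) '' (D ∩ Ioi x) with hS
  have hSne : S.Nonempty := hne.image _
  have hnonneg : ∀ b ∈ S, (0 : ℝ) ≤ b := by
    rintro _ ⟨y, ⟨hyD, hyx⟩, rfl⟩
    exact div_nonneg (sub_nonneg.2 (hmono hx hyD (le_of_lt hyx)))
      (sub_nonneg.2 (le_of_lt hyx))
  have hSbdd : BddBelow S := ⟨0, hnonneg⟩
  refine ⟨sInf S, le_csInf hSne hnonneg,
    fun y hy => csInf_le hSbdd ⟨y, hy, rfl⟩, ?_⟩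
  intro y hyD
  rcases lt_trichotomy y x with h | h | h
  · -- y < x
    have hle : (g x - g y) / (x - y) ≤ sInf S := by
      refine le_csInf hSne ?_
      rintro _ ⟨p, ⟨hpD, hpx⟩, rfl⟩
      exact hconv.slope_mono_adjacent hyD hpD h hpx
    have hxy : 0 < x - y := by linarith
    rw [div_le_iff₀ hxy] at hle
    nlinarith
  · simp [h]
  · have hle : sInf S ≤ (g y - g x) / (y - x) :=
      csInf_le hSbdd ⟨y, ⟨hyD, h⟩, rfl⟩
    have hxy : 0 < y - x := by linarith
    rw [le_div_iff₀ hxy] at hle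
    linarith

/-- The Hopf formula
`f(t,x) = sup_{z ∈ ℝ₊ × [0, αρ/2]} inf_{y ∈ [0,ρ] × ℝ₊} { z·(x−y) + ψ(y) + (2t/α) z₁z₂ }`
with separable `ψ(x) = ψ₁(x₁) + ψ₂(x₂)`, `ψ₁, ψ₂` Lipschitz, nondecreasing and convex,
and `ψ₂` with slope at most `αρ/2`, is finite on
`Ω = {(t,x) : t ∈ [0,1], 0 ≤ x₁ ≤ ρ(1−t), x₂ ≥ 0}` and satisfies the initial condition
`f(0,x) = ψ(x)` on `[0,ρ] × ℝ₊`. -/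
theorem hopf_formula_finite_and_initial
    (ρ α : ℝ) (hρ : 0 < ρ) (hα : 0 < α)
    (ψ₁ ψ₂ : ℝ → ℝ)
    (h₁lip : ∃ K : NNReal, LipschitzOnWith K ψ₁ (Icc (0 : ℝ) ρ))
    (h₁mono : MonotoneOn ψ₁ (Icc (0 : ℝ) ρ))
    (h₁conv : ConvexOn ℝ (Icc (0 : ℝ) ρ) ψ₁)
    (h₂lip : ∃ K : NNReal, LipschitzOnWith K ψ₂ (Ici (0 : ℝ)))
    (h₂mono : MonotoneOn ψ₂ (Ici (0 : ℝ)))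
    (h₂conv : ConvexOn ℝ (Ici (0 : ℝ)) ψ₂)
    (h₂slope : ∀ y' y : ℝ, 0 ≤ y' → y' ≤ y →
      ψ₂ y - ψ₂ y' ≤ (α * ρ / 2) * (y - y'))
    (val : ℝ → ℝ × ℝ → EReal)
    (hval : ∀ (t : ℝ) (x : ℝ × ℝ), val t x =
      ⨆ z ∈ (Ici (0 : ℝ) ×ˢ Icc (0 : ℝ) (α * ρ / 2)),
        ⨅ y ∈ (Icc (0 : ℝ) ρ ×ˢ Ici (0 : ℝ)),
          ((z.1 * (x.1 - y.1) + z.2 * (x.2 - y.2) + ψ₁ y.1 + ψ₂ y.2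
            + (2 * t / α) * z.1 * z.2 : ℝ) : EReal)) :
    (∀ t x₁ x₂ : ℝ, 0 ≤ t → t ≤ 1 → 0 ≤ x₁ → x₁ ≤ ρ * (1 - t) → 0 ≤ x₂ →
      ∃ r : ℝ, val t (x₁, x₂) = (r : EReal)) ∧
    (∀ x₁ x₂ : ℝ, 0 ≤ x₁ → x₁ ≤ ρ → 0 ≤ x₂ →
      val 0 (x₁, x₂) = ((ψ₁ x₁ + ψ₂ x₂ : ℝ) : EReal)) := by
  have hc : (0 : ℝ) ≤ α * ρ / 2 := by positivity
  constructor
  · intro t x₁ x₂ ht0 ht1 hx1 hx1' hx2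
    rw [hval]
    have hub : (⨆ z ∈ (Ici (0 : ℝ) ×ˢ Icc (0 : ℝ) (α * ρ / 2)),
        ⨅ y ∈ (Icc (0 : ℝ) ρ ×ˢ Ici (0 : ℝ)),
          ((z.1 * (x₁ - y.1) + z.2 * (x₂ - y.2) + ψ₁ y.1 + ψ₂ y.2
            + (2 * t / α) * z.1 * z.2 : ℝ) : EReal))
        ≤ ((ψ₁ ρ + ψ₂ x₂ : ℝ) : EReal) := by
      refine iSup₂_le fun z hz => ?_
      obtain ⟨hz1, hz2l, hz2r⟩ : (0 ≤ z.1) ∧ (0 ≤ z.2 ∧ z.2 ≤ α * ρ / 2) := hz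
      refine le_trans (iInf₂_le (ρ, x₂) ⟨⟨hρ.le, le_refl ρ⟩, hx2⟩) ?_
      rw [EReal.coe_le_coe_iff]
      have h1 : (2 * t / α) * z.2 ≤ t * ρ := by
        rw [div_mul_eq_mul_div, div_le_iff₀ hα]
        nlinarith
      have h2 : z.1 * (x₁ - ρ + (2 * t / α) * z.2) ≤ 0 := by
        apply mul_nonpos_of_nonneg_of_nonpos hz1
        nlinarith
      nlinarith [h2]
    have hlb : ((ψ₁ 0 + ψ₂ 0 : ℝ) : EReal)
        ≤ ⨆ z ∈ (Ici (0 : ℝ) ×ˢ Icc (0 : ℝ) (α * ρ / 2)),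
        ⨅ y ∈ (Icc (0 : ℝ) ρ ×ˢ Ici (0 : ℝ)),
          ((z.1 * (x₁ - y.1) + z.2 * (x₂ - y.2) + ψ₁ y.1 + ψ₂ y.2
            + (2 * t / α) * z.1 * z.2 : ℝ) : EReal) := by
      refine le_trans ?_
        (le_iSup₂ ((0 : ℝ), (0 : ℝ)) (⟨self_mem_Ici, ⟨le_refl 0, hc⟩⟩ :
          ((0 : ℝ), (0 : ℝ)) ∈ Ici (0 : ℝ) ×ˢ Icc (0 : ℝ) (α * ρ / 2)))
      refine le_iInf₂ fun y hy => ?_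
      obtain ⟨⟨hy1l, hy1r⟩, hy2⟩ : (0 ≤ y.1 ∧ y.1 ≤ ρ) ∧ 0 ≤ y.2 := hy
      rw [EReal.coe_le_coe_iff]
      have m1 : ψ₁ 0 ≤ ψ₁ y.1 := h₁mono ⟨le_refl 0, hρ.le⟩ ⟨hy1l, hy1r⟩ hy1l
      have m2 : ψ₂ 0 ≤ ψ₂ y.2 := h₂mono self_mem_Ici hy2 hy2
      simp only []
      nlinarith
    set A := ⨆ z ∈ (Ici (0 : ℝ) ×ˢ Icc (0 : ℝ) (α * ρ / 2)),
        ⨅ y ∈ (Icc (0 : ℝ) ρ ×ˢ Ici (0 : ℝ)),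
          ((z.1 * (x₁ - y.1) + z.2 * (x₂ - y.2) + ψ₁ y.1 + ψ₂ y.2
            + (2 * t / α) * z.1 * z.2 : ℝ) : EReal) with hA
    have hbot : A ≠ ⊥ := fun h => by
      rw [h] at hlb; exact absurd hlb (not_le.2 (EReal.bot_lt_coe _))
    have htop : A ≠ ⊤ := fun h => by
      rw [h] at hub; exact absurd hub (not_le.2 (EReal.coe_lt_top _))
    exact ⟨A.toReal, (EReal.coe_toReal htop hbot).symm⟩
  · intro x₁ x₂ hx1 hx1' hx2
    rw [hval]
    apply le_antisymm
    · refine iSup₂_le fun z hz => ?_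
      refine le_trans (iInf₂_le (x₁, x₂) ⟨⟨hx1, hx1'⟩, hx2⟩) ?_
      rw [EReal.coe_le_coe_iff]
      simp only []
      ring_nf
      simp
    · -- subgradients
      obtain ⟨s₂, hs₂0, hs₂slope, hs₂sub⟩ :=
        exists_subgradient_of_convexOn ψ₂ (Ici 0) h₂conv h₂mono x₂ hx2
          ⟨x₂ + 1, by constructor <;> simp <;> linarith⟩
      have hs₂le : s₂ ≤ α * ρ / 2 := by
        have h1 := hs₂slope (x₂ + 1) ⟨by simp; linarith, by simp⟩
        have h2 := h₂slope x₂ (x₂ + 1) hx2 (by linarith)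
        have h3 : x₂ + 1 - x₂ = 1 := by ring
        rw [h3] at h1
        simp at h1 h2
        linarith
      have hs₁ : ∃ s₁ : ℝ, 0 ≤ s₁ ∧ ∀ y ∈ Icc (0:ℝ) ρ, ψ₁ x₁ + s₁ * (y - x₁) ≤ ψ₁ y := by
        rcases lt_or_eq_of_le hx1' with h | h
        · obtain ⟨s₁, hs₁0, _, hs₁sub⟩ :=
            exists_subgradient_of_convexOn ψ₁ (Icc 0 ρ) h₁conv h₁mono x₁ ⟨hx1, hx1'⟩
              ⟨ρ, ⟨⟨hρ.le, le_refl ρ⟩, h⟩⟩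
          exact ⟨s₁, hs₁0, hs₁sub⟩
        · obtain ⟨K, hK⟩ := h₁lip
          refine ⟨K, K.2, fun y hy => ?_⟩
          have hd := hK.dist_le_mul x₁ ⟨hx1, hx1'⟩ y hy
          rw [Real.dist_eq, Real.dist_eq] at hd
          have h1 : ψ₁ x₁ - ψ₁ y ≤ |ψ₁ x₁ - ψ₁ y| := le_abs_self _
          have h2 : |x₁ - y| = x₁ - y := abs_of_nonneg (by rw [h]; linarith [hy.2])
          rw [h2] at hd
          nlinarith
      obtain ⟨s₁, hs₁0, hs₁sub⟩ := hs₁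
      refine le_trans ?_
        (le_iSup₂ (s₁, s₂) (⟨hs₁0, ⟨hs₂0, hs₂le⟩⟩ :
          (s₁, s₂) ∈ Ici (0 : ℝ) ×ˢ Icc (0 : ℝ) (α * ρ / 2)))
      refine le_iInf₂ fun y hy => ?_
      obtain ⟨⟨hy1l, hy1r⟩, hy2⟩ : (0 ≤ y.1 ∧ y.1 ≤ ρ) ∧ 0 ≤ y.2 := hy
      rw [EReal.coe_le_coe_iff]
      have g1 := hs₁sub y.1 ⟨hy1l, hy1r⟩
      have g2 := hs₂sub y.2 hy2
      have e : (2 : ℝ) * 0 / α * s₁ * s₂ = 0 := by simp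
      simp only []
      rw [e]
      nlinarith [g1, g2]
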